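/- Assume A is a local ring with finitely generated maximal ideal M such that f(M)B = B (i.e., the ideal of B generated by f(M) is all of B), and that J is contained in the Jacobson radical Jac(B) of B. Then A⋈^f J is a local ring with finitely generated maximal ideal, and embdim(A) = embdim(A⋈^f J). -/

import Mathlib

section Amalgamation

variable {A B : Type*} [CommRing A] [CommRing B]

/-- The amalgamation `A ⋈^f J` of `A` with `B` along the ideal `J` of `B` with respect to
the ring homomorphism `f : A → B`, realized as the subring
`{(a, f a + j) | a ∈ A, j ∈ J}` of `A × B`. -/
def amalg (f : A →+* B) (J : Ideal B) : Subring (A × B) where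
  carrier := {x : A × B | x.2 - f x.1 ∈ J}
  zero_mem' := by simp
  one_mem' := by simp
  add_mem' := by
    intro x y hx hy
    simp only [Set.mem_setOf_eq, Prod.fst_add, Prod.snd_add, map_add] at *
    have h : x.2 + y.2 - (f x.1 + f y.1) = x.2 - f x.1 + (y.2 - f y.1) := by ring
    rw [h]; exact J.add_mem hx hy
  neg_mem' := by
    intro x hx
    simp only [Set.mem_setOf_eq, Prod.fst_neg, Prod.snd_neg, map_neg] at *
    have h : -x.2 - -f x.1 = -(x.2 - f x.1) := by ring
    rw [h]; exact J.neg_mem hx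
  mul_mem' := by
    intro x y hx hy
    simp only [Set.mem_setOf_eq, Prod.fst_mul, Prod.snd_mul, map_mul] at *
    have h : x.2 * y.2 - f x.1 * f y.1 = x.2 * (y.2 - f y.1) + (x.2 - f x.1) * f y.1 := by ring
    rw [h]
    exact J.add_mem (J.mul_mem_left _ hy) (J.mul_mem_right _ hx)

lemma mem_amalg_iff (f : A →+* B) (J : Ideal B) (x : A × B) :
    x ∈ amalg f J ↔ x.2 - f x.1 ∈ J := Iff.rfl

/-- The natural projection `p_A : A ⋈^f J → A`. -/
def pA (f : A →+* B) (J : Ideal B) : amalg f J →+* A :=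
  (RingHom.fst A B).comp (amalg f J).subtype

/-- The natural projection `p_B : A ⋈^f J → B`. -/
def pB (f : A →+* B) (J : Ideal B) : amalg f J →+* B :=
  (RingHom.snd A B).comp (amalg f J).subtype

/-- For an ideal `P` of `A`, the ideal `P'^f = P ⋈^f J = {(p, f p + j) | p ∈ P, j ∈ J}`
of `A ⋈^f J`. -/
def idealPf (f : A →+* B) (J : Ideal B) (P : Ideal A) : Ideal (amalg f J) :=
  Submodule.copy (Ideal.comap (pA f J) P)
    {x : amalg f J | ∃ p ∈ P, ∃ j ∈ J, (x : A × B) = (p, f p + j)}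
    (by
      ext x
      simp only [Set.mem_setOf_eq, SetLike.mem_coe, Ideal.mem_comap]
      constructor
      · rintro ⟨p, hp, j, hj, hx⟩
        have h1 : pA f J x = p := by
          show (x : A × B).1 = p
          rw [hx]
        rw [h1]; exact hp
      · intro hx
        refine ⟨(x : A × B).1, hx, (x : A × B).2 - f (x : A × B).1,
          (mem_amalg_iff f J _).mp x.2, ?_⟩
        ext <;> simp)

/-- `nu I` is the minimal number of generators of the ideal `I`. -/
noncomputable def nu {R : Type*} [CommRing R] (I : Ideal R) : ℕ :=
  sInf {n : ℕ | ∃ s : Finset R, s.card = n ∧ Ideal.span (s : Set R) = I}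

end Amalgamation

section Aux

variable {A B : Type*} [CommRing A] [CommRing B]

/-- The canonical section `A → A ⋈^f J`, `a ↦ (a, f a)`. -/
def gHom (f : A →+* B) (J : Ideal B) : A →+* amalg f J where
  toFun a := ⟨(a, f a), by simp [mem_amalg_iff]⟩
  map_one' := by apply Subtype.ext; simp
  map_mul' x y := by apply Subtype.ext; simp
  map_zero' := by apply Subtype.ext; simp
  map_add' x y := by apply Subtype.ext; simp

lemma pA_surjective (f : A →+* B) (J : Ideal B) : Function.Surjective (pA f J) :=
  fun a => ⟨gHom f J a, rfl⟩

lemma idealPf_eq (f : A →+* B) (J : Ideal B) (P : Ideal A) :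
    idealPf f J P = Ideal.comap (pA f J) P :=
  Submodule.copy_eq _ _ _

lemma nu_le_card {R : Type*} [CommRing R] {I : Ideal R} {s : Finset R}
    (h : Ideal.span (s : Set R) = I) : nu I ≤ s.card :=
  Nat.sInf_le ⟨s, rfl, h⟩

lemma exists_card_nu {R : Type*} [CommRing R] {I : Ideal R} (h : I.FG) :
    ∃ s : Finset R, s.card = nu I ∧ Ideal.span (s : Set R) = I := by
  obtain ⟨t, ht⟩ := h
  have hne : {n : ℕ | ∃ s : Finset R, s.card = n ∧ Ideal.span (s : Set R) = I}.Nonempty :=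
    ⟨t.card, t, rfl, ht⟩
  have := Nat.sInf_mem hne
  obtain ⟨s, hs1, hs2⟩ := this
  exact ⟨s, hs1, hs2⟩

lemma isUnit_of_fst_not_mem (f : A →+* B) (J : Ideal B) (M : Ideal A)
    (hu : ∀ N : Ideal A, N.IsMaximal → N = M) (hJac : J ≤ (⊥ : Ideal B).jacobson)
    (x : amalg f J) (hx : (x : A × B).1 ∉ M) : IsUnit x := by
  set a := (x : A × B).1 with ha
  have hua : IsUnit a := by
    by_contra h
    have hne : Ideal.span {a} ≠ ⊤ := fun ht => h (Ideal.span_singleton_eq_top.mp ht)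
    obtain ⟨N, hN, hle⟩ := Ideal.exists_le_maximal _ hne
    exact hx (hu N hN ▸ hle (Ideal.subset_span rfl))
  obtain ⟨b, hb⟩ := isUnit_iff_exists_inv.mp hua
  have hj : (x : A × B).2 - f a ∈ J := x.2
  set j := (x : A × B).2 - f a with hjdef
  have hfab : f a * f b = 1 := by rw [← map_mul, hb, map_one]
  have hunit2 : IsUnit ((x : A × B).2) := by
    have h1 : IsUnit (j * f b + 1) := (Ideal.mem_jacobson_bot.mp (hJac hj)) (f b)
    have h2 : (x : A × B).2 = f a * (j * f b + 1) := by
      rw [hjdef]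
      linear_combination (f a - (x : A × B).2) * hfab
    rw [h2]
    exact (hua.map f).mul h1
  obtain ⟨c, hc⟩ := isUnit_iff_exists_inv.mp hunit2
  have hz : c - f b ∈ J := by
    have hkey : c - f b = (-(c * f b)) * j := by
      rw [hjdef]
      linear_combination f b * hc - c * hfab
    rw [hkey]
    exact J.mul_mem_left _ hj
  refine IsUnit.of_mul_eq_one (a := x) ⟨(b, c), hz⟩ ?_
  apply Subtype.ext
  apply Prod.ext
  · exact hb
  · exact hc

/-- The element `(0, j)` of the amalgamation. -/
def el0 (f : A →+* B) (J : Ideal B) (j : B) (hj : j ∈ J) : amalg f J :=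
  ⟨(0, j), by rw [mem_amalg_iff]; simpa using hj⟩

open Classical in
lemma span_image_gHom (f : A →+* B) (J : Ideal B) (M : Ideal A)
    (hMB : Ideal.map f M = ⊤) {s : Finset A} (hs : Ideal.span (s : Set A) = M) :
    Ideal.span ((s.image (gHom f J) : Finset (amalg f J)) : Set (amalg f J))
      = idealPf f J M := by
  classical
  set T : Finset (amalg f J) := s.image (gHom f J) with hT
  rw [idealPf_eq]
  -- images of elements of M are in the span
  have hgm : ∀ m ∈ M, gHom f J m ∈ Ideal.span (T : Set (amalg f J)) := by
    have hle : M ≤ Ideal.comap (gHom f J) (Ideal.span (T : Set (amalg f J))) := by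
      rw [← hs, Ideal.span_le]
      intro a haA
      simp only [SetLike.mem_coe, Ideal.mem_comap]
      refine Ideal.subset_span ?_
      rw [hT]
      simp only [Finset.coe_image, Set.mem_image, Finset.mem_coe]
      exact ⟨a, haA, rfl⟩
    intro m hm
    exact hle hm
  -- the elements (0, j) are in the span
  have h0j : ∀ (j : B) (hj : j ∈ J), el0 f J j hj ∈ Ideal.span (T : Set (amalg f J)) := by
    have h1 : (1 : B) ∈ Ideal.span (f '' (M : Set A)) := by
      have heq : Ideal.map f M = Ideal.span (f '' (M : Set A)) := rfl
      rw [← heq, hMB]; trivial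
    have key : ∀ b : B, b ∈ Ideal.span (f '' (M : Set A)) →
        ∀ (j : B) (hj : j ∈ J),
          el0 f J (j * b) (J.mul_mem_right b hj) ∈ Ideal.span (T : Set (amalg f J)) := by
      intro b hb
      refine Submodule.span_induction ?_ ?_ ?_ ?_ hb
      · rintro b ⟨m, hm, rfl⟩ j hj
        have heq : el0 f J (j * f m) (J.mul_mem_right _ hj)
            = gHom f J m * el0 f J j hj := by
          apply Subtype.ext; apply Prod.ext <;> simp [el0, gHom, mul_comm]
        rw [heq]
        exact Ideal.mul_mem_right _ _ (hgm m hm)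
      · intro j hj
        have heq : el0 f J (j * 0) (J.mul_mem_right _ hj) = 0 := by
          apply Subtype.ext; apply Prod.ext <;> simp [el0]
        rw [heq]; exact (Ideal.span _).zero_mem
      · intro b c _ _ hbI hcI j hj
        have heq : el0 f J (j * (b + c)) (J.mul_mem_right _ hj)
            = el0 f J (j * b) (J.mul_mem_right _ hj)
              + el0 f J (j * c) (J.mul_mem_right _ hj) := by
          apply Subtype.ext; apply Prod.ext <;> simp [el0, mul_add]
        rw [heq]
        exact (Ideal.span _).add_mem (hbI j hj) (hcI j hj)
      · intro r b _ hbI j hj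
        have hjr : j * r ∈ J := J.mul_mem_right _ hj
        have heq : el0 f J (j * (r • b)) (J.mul_mem_right _ hj)
            = el0 f J ((j * r) * b) (J.mul_mem_right _ hjr) := by
          apply Subtype.ext; apply Prod.ext <;> simp [el0, smul_eq_mul]; ring
        rw [heq]
        exact hbI (j * r) hjr
    intro j hj
    have hkey := key 1 h1 j hj
    have heq : el0 f J (j * 1) (J.mul_mem_right 1 hj) = el0 f J j hj := by
      apply Subtype.ext; apply Prod.ext <;> simp [el0]
    rw [heq] at hkey
    exact hkey
  apply le_antisymm
  · rw [Ideal.span_le]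
    intro x hx
    rw [hT] at hx
    simp only [Finset.coe_image, Set.mem_image, Finset.mem_coe] at hx
    obtain ⟨a, haA, rfl⟩ := hx
    simp only [SetLike.mem_coe, Ideal.mem_comap]
    show (gHom f J a : A × B).1 ∈ M
    have : a ∈ M := hs ▸ Ideal.subset_span haA
    simpa [gHom] using this
  · intro y hy
    have hm : (y : A × B).1 ∈ M := hy
    have hjy : (y : A × B).2 - f (y : A × B).1 ∈ J := y.2
    have hdec : y = gHom f J (y : A × B).1 + el0 f J _ hjy := by
      apply Subtype.ext; apply Prod.ext <;> simp [gHom, el0]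
    rw [hdec]
    exact (Ideal.span _).add_mem (hgm _ hm) (h0j _ hjy)

end Aux

/-- If `A` is local with finitely generated maximal ideal `M`, `f(M)B = B`, and
`J ⊆ Jac(B)`, then `A ⋈^f J` is local with finitely generated maximal ideal
`M ⋈^f J` and `embdim A = embdim (A ⋈^f J)`. -/
theorem stmt17 {A B : Type*} [CommRing A] [CommRing B] (f : A →+* B) (J : Ideal B)
    (M : Ideal A) (hM : M.IsMaximal) (hu : ∀ N : Ideal A, N.IsMaximal → N = M)
    (hMfg : M.FG) (hMB : Ideal.map f M = ⊤) (hJac : J ≤ (⊥ : Ideal B).jacobson) :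
    IsLocalRing (amalg f J) ∧ (idealPf f J M).IsMaximal ∧ (idealPf f J M).FG ∧
      nu M = nu (idealPf f J M) := by
  classical
  have hsurj := pA_surjective f J
  have hMmax : (idealPf f J M).IsMaximal := by
    rw [idealPf_eq]
    exact Ideal.comap_isMaximal_of_surjective _ hsurj
  -- every element outside idealPf is a unit
  have hunit : ∀ x : amalg f J, x ∉ idealPf f J M → IsUnit x := by
    intro x hx
    rw [idealPf_eq] at hx
    exact isUnit_of_fst_not_mem f J M hu hJac x hx
  -- nontrivial
  have hA : (0 : A) ≠ 1 := by
    intro h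
    exact hM.ne_top (Ideal.eq_top_iff_one M |>.mpr (h ▸ M.zero_mem))
  haveI : Nontrivial (amalg f J) := by
    refine ⟨0, 1, fun h => hA ?_⟩
    exact congrArg (fun r : amalg f J => (r : A × B).1) h
  have hlocal : IsLocalRing (amalg f J) := by
    apply IsLocalRing.of_nonunits_add
    intro x y hx hy
    have hxM : x ∈ idealPf f J M := by
      by_contra h; exact hx (hunit x h)
    have hyM : y ∈ idealPf f J M := by
      by_contra h; exact hy (hunit y h)
    intro h
    exact hMmax.ne_top (Ideal.eq_top_of_isUnit_mem _ ((idealPf f J M).add_mem hxM hyM) h)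
  -- FG
  obtain ⟨s, hscard, hsspan⟩ := exists_card_nu hMfg
  have hTspan := span_image_gHom f J M hMB hsspan
  have hfg : (idealPf f J M).FG := ⟨s.image (gHom f J), hTspan⟩
  refine ⟨hlocal, hMmax, hfg, le_antisymm ?_ ?_⟩
  · -- nu M ≤ nu (idealPf f J M)
    obtain ⟨T, hTcard, hT⟩ := exists_card_nu hfg
    have hmapspan : Ideal.span ((T.image (pA f J) : Finset A) : Set A) = M := by
      rw [Finset.coe_image, ← Ideal.map_span, hT, idealPf_eq,
        Ideal.map_comap_of_surjective _ hsurj]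
    calc nu M ≤ (T.image (pA f J)).card := nu_le_card hmapspan
      _ ≤ T.card := Finset.card_image_le
      _ = nu (idealPf f J M) := hTcard
  · -- nu (idealPf f J M) ≤ nu M
    calc nu (idealPf f J M) ≤ (s.image (gHom f J)).card := nu_le_card hTspan
      _ ≤ s.card := Finset.card_image_le
      _ = nu M := hscard
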